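/- A degree d reduced codimension one foliation F_φ on P³ has tangent sheaf isomorphic to O(1) ⊕ O(1−d) if and only if it is the linear pull-back of a degree d reduced foliation on P². -/

import Mathlib

open MvPolynomial

/-! Codimension one holomorphic foliations on `ℙ³`, in algebraic form.
A degree `d` codimension one foliation is given by a projective `1`-form
`ω = ∑ Fᵢ dzᵢ` where the `Fᵢ ∈ ℂ[z₀,…,z₃]` are homogeneous of degree `d+1`,
satisfy the Euler relation `∑ zᵢFᵢ = 0`, the integrability condition
`ω ∧ dω = 0`, and the common zero scheme (the singular scheme `Z`) has
codimension at least two.  The tangent sheaf `𝓕` of the foliation is the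
kernel of `Tℙ³ → 𝓘_Z(d+2)`; combining this with the Euler sequence,
`𝓕 ⊕ 𝓞` is the sheaf associated with the graded module of syzygies
`Syz F = {(ℓ₀,…,ℓ₃) : ∑ ℓᵢFᵢ = 0}` (twisted by `1`), so that `𝓕` is
locally free (resp. splits as a sum of line bundles) iff `Syz F` is locally
free at all relevant homogeneous primes (resp. is a free module). -/

noncomputable section

local notation "R4" => MvPolynomial (Fin 4) ℂ

/-- The Euler relation `∑ zᵢ Fᵢ = 0`. -/
def EulerRel (F : Fin 4 → R4) : Prop := ∑ i, X i * F i = 0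

/-- The integrability condition `ω ∧ dω = 0` for `ω = ∑ Fᵢ dzᵢ`, written out
in coefficients. -/
def IntegrableForm (F : Fin 4 → R4) : Prop :=
  ∀ i j k : Fin 4,
    F i * (pderiv j (F k) - pderiv k (F j)) +
    F j * (pderiv k (F i) - pderiv i (F k)) +
    F k * (pderiv i (F j) - pderiv j (F i)) = 0

/-- The singular scheme `{F₀ = ⋯ = F₃ = 0}` has codimension at least two:
the `Fᵢ` have no common prime factor. -/
def CodimGE2 (F : Fin 4 → R4) : Prop := ¬ ∃ p : R4, Prime p ∧ ∀ i, p ∣ F i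

/-- `ω = ∑ Fᵢ dzᵢ` defines a degree `d` codimension one foliation on `ℙ³`
with singular scheme of codimension at least two. -/
def IsFoliation (d : ℕ) (F : Fin 4 → R4) : Prop :=
  (∀ i, (F i).IsHomogeneous (d + 1)) ∧ EulerRel F ∧ IntegrableForm F ∧ CodimGE2 F

/-- The saturation `I^sat = ⋃ₗ (I : (z₀,…,z₃)ˡ)` of an ideal of
`ℂ[z₀,…,z₃]`. -/
def satIdeal (I : Ideal R4) : Ideal R4 :=
  ⨆ l : ℕ, I.colon ((Ideal.span (Set.range (X : Fin 4 → R4))) ^ l : Ideal R4)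

/-- An ideal of `ℂ[z₀,…,z₃]` is saturated if it coincides with its
saturation. -/
def IsSaturated (I : Ideal R4) : Prop := satIdeal I = I

/-- The homogeneous ideal `(F₀,…,F₃)` defining the singular scheme. -/
def singIdeal (F : Fin 4 → R4) : Ideal R4 := Ideal.span (Set.range F)

/-- The graded module of syzygies of `(F₀,…,F₃)`; it is the module of twisted
global sections of `𝓕 ⊕ 𝓞` (suitably twisted), where `𝓕` is the tangent
sheaf of the foliation defined by `∑ Fᵢ dzᵢ`. -/
def Syz (F : Fin 4 → R4) : Submodule R4 (Fin 4 → R4) :=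
  LinearMap.ker (Fintype.linearCombination R4 F)

/-- The irrelevant ideal `(z₀,…,z₃)`. -/
def irrelevant : Ideal R4 := Ideal.span (Set.range (X : Fin 4 → R4))

/-- An ideal is homogeneous if it contains all homogeneous components of its
elements. -/
def IsHomogIdeal (I : Ideal R4) : Prop :=
  ∀ f ∈ I, ∀ n : ℕ, homogeneousComponent n f ∈ I

/-- The tangent sheaf of the foliation given by `F` is locally free:
the syzygy module is free at every relevant point of `Proj ℂ[z₀,…,z₃] = ℙ³`. -/
def TangentLocallyFree (F : Fin 4 → R4) : Prop :=
  ∀ p : Ideal R4, ∀ hp : p.IsPrime, IsHomogIdeal p → ¬ irrelevant ≤ p →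
    Module.Free (Localization (p.primeCompl (hp := hp)))
      (LocalizedModule (p.primeCompl (hp := hp)) ↥(Syz F))

/-- The tangent sheaf of the foliation given by `F` splits as a direct sum of
two line bundles: equivalently (by Horrocks' criterion), the graded module of
syzygies of `(F₀,…,F₃)` is free. -/
def TangentSplits (F : Fin 4 → R4) : Prop := Module.Free R4 ↥(Syz F)


/-- The foliation defined by `F` is, up to an invertible linear change of
coordinates, defined by a `1`-form with no `dz₀` component and coefficients
not involving `z₀`, i.e. it is the linear pull-back (under a linear projection
`ℙ³ ⇢ ℙ²`) of a foliation on a plane. -/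
def IsLinearPullback (F : Fin 4 → R4) : Prop :=
  ∃ A : Matrix (Fin 4) (Fin 4) ℂ, IsUnit A ∧
    (∑ i, (aeval (fun k => ∑ l, C (A k l) * X l) (F i)) * C (A i 0) = 0) ∧
    ∀ j, pderiv (0 : Fin 4)
      (∑ i, (aeval (fun k => ∑ l, C (A k l) * X l) (F i)) * C (A i j)) = 0

/-- The tangent sheaf of the foliation defined by `F` is isomorphic to
`𝓞(1) ⊕ 𝓞(1-d)`: the syzygy module of `(F₀,…,F₃)` is freely generated by the
Euler syzygy together with a constant syzygy (degree `1 - 1 = 0`) and a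
homogeneous syzygy of degree `1 - (1-d) = d`. -/
def SplitsAsO1OplusO1subD (d : ℕ) (F : Fin 4 → R4) : Prop :=
  ∃ (c : Fin 4 → ℂ) (v : Fin 4 → R4),
    (∀ i, (v i).IsHomogeneous d) ∧
    (∀ s : Fin 4 → R4, (∑ i, s i * F i = 0) ↔
      ∃ p q r : R4, s = fun i => p * C (c i) + q * v i + r * X i) ∧
    (∀ p q r : R4,
      (fun i => p * C (c i) + q * v i + r * X i) = (0 : Fin 4 → R4) →
      p = 0 ∧ q = 0 ∧ r = 0)

section AuxLemmas

def subA (A : Matrix (Fin 4) (Fin 4) ℂ) : R4 →ₐ[ℂ] R4 :=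
  aeval fun k => ∑ l, C (A k l) * X l

lemma subA_X (A : Matrix (Fin 4) (Fin 4) ℂ) (k : Fin 4) :
    subA A (X k) = ∑ l, C (A k l) * X l := by
  simp [subA]

lemma subA_C (A : Matrix (Fin 4) (Fin 4) ℂ) (a : ℂ) : subA A (C a) = C a := by
  simp [subA, algebraMap_eq]

lemma subA_subA (A B : Matrix (Fin 4) (Fin 4) ℂ) (f : R4) :
    subA A (subA B f) = subA (B * A) f := by
  have : (subA A).comp (subA B) = subA (B * A) := by
    apply algHom_ext
    intro k
    simp only [AlgHom.comp_apply, subA_X, map_sum, map_mul, subA_C, Matrix.mul_apply]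
    simp only [Finset.mul_sum, Finset.sum_mul]
    rw [Finset.sum_comm]
    refine Finset.sum_congr rfl fun l _ => Finset.sum_congr rfl fun x _ => by ring
  calc subA A (subA B f) = ((subA A).comp (subA B)) f := rfl
  _ = subA (B * A) f := by rw [this]

lemma subA_one (f : R4) : subA 1 f = f := by
  have : subA (1 : Matrix (Fin 4) (Fin 4) ℂ) = AlgHom.id ℂ R4 := by
    apply algHom_ext
    intro k
    simp [subA_X, Matrix.one_apply, apply_ite C, ite_mul]
  rw [this]; rfl

lemma collapseC (M N : Matrix (Fin 4) (Fin 4) ℂ) (x : Fin 4 → R4) (i : Fin 4) :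
    ∑ j, C (M i j) * ∑ k, C (N j k) * x k = ∑ k, C ((M * N) i k) * x k := by
  simp only [Matrix.mul_apply, map_sum, Finset.sum_mul, Finset.mul_sum]
  rw [Finset.sum_comm]
  refine Finset.sum_congr rfl fun k _ => Finset.sum_congr rfl fun j _ => ?_
  rw [map_mul]; ring

lemma pderiv_subA (A : Matrix (Fin 4) (Fin 4) ℂ) (f : R4) (m : Fin 4) :
    pderiv m (subA A f) = ∑ n, C (A n m) * subA A (pderiv n f) := by
  induction f using MvPolynomial.induction_on with
  | C a => simp [subA_C]
  | add p q hp hq => simp [map_add, hp, hq, mul_add, Finset.sum_add_distrib]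
  | mul_X p i hp =>
    have hXi : pderiv m (subA A (X i)) = C (A i m) := by
      simp [subA_X, pderiv_X, Pi.single_apply, apply_ite (C (σ := Fin 4) (R := ℂ)),
        mul_ite, Finset.sum_ite_eq', eq_comm]
    rw [map_mul, pderiv_mul, hp, hXi]
    have : ∀ n : Fin 4, pderiv n (p * X i) = pderiv n p * X i + p * pderiv n (X i) := by
      intro n; rw [pderiv_mul]
    simp only [this, map_add, map_mul, mul_add, Finset.sum_add_distrib, Finset.sum_mul]
    refine congrArg₂ (· + ·) ?_ ?_
    · refine Finset.sum_congr rfl fun n _ => by ring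
    · simp only [pderiv_X, Pi.single_apply, apply_ite (C (σ := Fin 4) (R := ℂ))]
      simp [apply_ite (subA A), mul_ite, Finset.sum_ite_eq', eq_comm]
      ring

lemma subA_isHomogeneous (A : Matrix (Fin 4) (Fin 4) ℂ) {f : R4} {n : ℕ}
    (hf : f.IsHomogeneous n) : (subA A f).IsHomogeneous n := by
  have := hf.aeval (fun k => ∑ l, C (A k l) * X l) (n := 1) (fun i => ?_)
  · simpa [subA] using this
  · exact IsHomogeneous.sum _ _ _ fun l _ => isHomogeneous_C_mul_X _ _

def zeroAt (s : Finset (Fin 4)) : R4 →ₐ[ℂ] R4 :=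
  aeval fun k => if k ∈ s then 0 else X k

lemma sub_zeroAt_mem (s : Finset (Fin 4)) (f : R4) :
    f - zeroAt s f ∈ Ideal.span ((fun i => (X i : R4)) '' ↑s) := by
  induction f using MvPolynomial.induction_on with
  | C a => simp [zeroAt, algebraMap_eq]
  | add p q hp hq =>
    have : p + q - zeroAt s (p + q) = (p - zeroAt s p) + (q - zeroAt s q) := by
      rw [map_add]; ring
    rw [this]; exact Ideal.add_mem _ hp hq
  | mul_X p i hp =>
    have : p * X i - zeroAt s (p * X i) =
        (p - zeroAt s p) * X i + zeroAt s p * (X i - zeroAt s (X i)) := by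
      rw [map_mul]; ring
    rw [this]
    refine Ideal.add_mem _ (Ideal.mul_mem_right _ _ hp) (Ideal.mul_mem_left _ _ ?_)
    by_cases h : i ∈ s
    · have : zeroAt s (X i) = 0 := by simp [zeroAt, h]
      rw [this, sub_zero]
      exact Ideal.subset_span ⟨i, by simpa using h, rfl⟩
    · have : zeroAt s (X i) = X i := by simp [zeroAt, h]
      rw [this, sub_self]
      exact Ideal.zero_mem _

lemma zeroAt_eq_zero_iff (s : Finset (Fin 4)) (f : R4) :
    zeroAt s f = 0 ↔ f ∈ Ideal.span ((fun i => (X i : R4)) '' ↑s) := by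
  constructor
  · intro h
    have := sub_zeroAt_mem s f
    rwa [h, sub_zero] at this
  · intro h
    refine Submodule.span_induction ?_ ?_ ?_ ?_ h
    · rintro x ⟨i, hi, rfl⟩
      simp only [Finset.mem_coe] at hi
      simp [zeroAt, hi]
    · simp
    · intro x y _ _ hx hy; rw [map_add, hx, hy, add_zero]
    · intro r x _ hx
      rw [smul_eq_mul, map_mul, hx, mul_zero]

lemma prime_X4 (i : Fin 4) : Prime (X i : R4) := by
  have hz : zeroAt {i} (X i) = 0 := by simp [zeroAt]
  have hdvd : ∀ f : R4, X i ∣ f ↔ zeroAt {i} f = 0 := by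
    intro f
    rw [zeroAt_eq_zero_iff]
    simp only [Finset.coe_singleton, Set.image_singleton, Ideal.mem_span_singleton]
  refine ⟨X_ne_zero _, fun h => ?_, fun a b hab => ?_⟩
  · have := h.map (zeroAt {i})
    rw [hz] at this
    exact not_isUnit_zero this
  · rw [hdvd] at hab
    rw [map_mul] at hab
    rcases mul_eq_zero.mp hab with h | h
    · exact Or.inl ((hdvd a).mpr h)
    · exact Or.inr ((hdvd b).mpr h)

lemma proportional {g u : Fin 4 → R4}
    (hcd : ¬∃ p : R4, Prime p ∧ ∀ i, p ∣ g i)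
    (h : ∀ i j, u i * g j = u j * g i) :
    ∃ α : R4, ∀ i, u i = α * g i := by
  have hgne : ∃ i₀, g i₀ ≠ 0 := by
    by_contra hall
    push_neg at hall
    exact hcd ⟨X 0, prime_X4 0, fun i => by rw [hall i]; exact dvd_zero _⟩
  obtain ⟨i₀, hi₀⟩ := hgne
  have key : ∀ a : R4, ∀ u' : R4, (∀ j, a ∣ u' * g j) → a ∣ u' := by
    intro a
    induction a using UniqueFactorizationMonoid.induction_on_prime with
    | h₁ =>
      intro u' hu'
      have := hu' i₀
      rw [zero_dvd_iff] at this ⊢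
      rcases mul_eq_zero.mp this with h' | h'
      · exact h'
      · exact absurd h' hi₀
    | h₂ x hx => exact fun u' _ => hx.dvd
    | h₃ a p ha hp ih =>
      intro u' hu'
      have hex : ∃ j, ¬ p ∣ g j := by
        by_contra hall
        push_neg at hall
        exact hcd ⟨p, hp, hall⟩
      obtain ⟨j₁, hj₁⟩ := hex
      have hpu : p ∣ u' := by
        rcases hp.dvd_or_dvd (dvd_trans (Dvd.intro a rfl) (hu' j₁)) with h' | h'
        · exact h'
        · exact absurd h' hj₁
      obtain ⟨w, rfl⟩ := hpu
      have : ∀ j, a ∣ w * g j := by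
        intro j
        have := hu' j
        rw [mul_assoc] at this
        exact (mul_dvd_mul_iff_left hp.ne_zero).mp this
      exact mul_dvd_mul_left p (ih w this)
  have hdvd : g i₀ ∣ u i₀ := by
    refine key _ _ fun j => ?_
    rw [h i₀ j]
    exact ⟨u j, mul_comm _ _⟩
  obtain ⟨α, hα⟩ := hdvd
  refine ⟨α, fun i => ?_⟩
  have := h i i₀
  rw [hα] at this
  have : u i * g i₀ = α * g i * g i₀ := by rw [this]; ring
  exact mul_right_cancel₀ hi₀ this

lemma homogComp_self {f : R4} {n : ℕ} (hf : f.IsHomogeneous n) :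
    homogeneousComponent n f = f := by
  rw [homogeneousComponent_of_mem hf, if_pos rfl]

lemma homogComp_ne {f : R4} {n m : ℕ} (hf : f.IsHomogeneous n) (h : m ≠ n) :
    homogeneousComponent m f = 0 := by
  rw [homogeneousComponent_of_mem hf, if_neg h]

lemma homogComp_mul_right {g : R4} {n : ℕ} (hg : g.IsHomogeneous n) (f : R4) (k : ℕ) :
    homogeneousComponent (k + n) (f * g) = homogeneousComponent k f * g := by
  conv_lhs => rw [← sum_homogeneousComponent f]
  rw [Finset.sum_mul, map_sum]
  have hterm : ∀ i : ℕ, homogeneousComponent (k + n) (homogeneousComponent i f * g) =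
      if k = i then homogeneousComponent i f * g else 0 := by
    intro i
    rw [homogeneousComponent_of_mem ((homogeneousComponent_isHomogeneous i f).mul hg)]
    congr 1
    simp [Nat.add_right_cancel_iff, eq_comm]
  simp_rw [hterm]
  rw [Finset.sum_ite_eq]
  by_cases hk : k ∈ Finset.range (f.totalDegree + 1)
  · rw [if_pos hk]
  · rw [if_neg hk]
    have : homogeneousComponent k f = 0 := by
      apply homogeneousComponent_eq_zero
      simpa [Nat.lt_succ_iff] using hk
    rw [this, zero_mul]

lemma eq_zero_of_mul_isHomogeneous_lt {h g : R4} {n m : ℕ} (hg : g.IsHomogeneous n)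
    (hgne : g ≠ 0) (hm : (h * g).IsHomogeneous m) (hmn : m < n) : h = 0 := by
  have hcomp : ∀ k : ℕ, homogeneousComponent k h = 0 := by
    intro k
    have h1 : homogeneousComponent (k + n) (h * g) = homogeneousComponent k h * g :=
      homogComp_mul_right hg h k
    have h2 : homogeneousComponent (k + n) (h * g) = 0 :=
      homogComp_ne hm (by omega)
    have := h1.symm.trans h2
    rcases mul_eq_zero.mp this with h' | h'
    · exact h'
    · exact absurd h' hgne
  rw [← sum_homogeneousComponent h]
  simp [hcomp]

lemma degree_single_one (i : Fin 4) : Finsupp.degree (Finsupp.single i 1) = 1 := by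
  exact Finsupp.degree_single i 1

lemma pderiv_isHomogeneous {f : R4} {n : ℕ} (hf : f.IsHomogeneous (n + 1)) (i : Fin 4) :
    (pderiv i f).IsHomogeneous n := by
  conv => arg 1; rw [f.as_sum]
  rw [map_sum]
  apply IsHomogeneous.sum
  intro m hm
  rw [pderiv_monomial]
  by_cases hmi : m i = 0
  · rw [hmi]
    simp only [Nat.cast_zero, mul_zero, map_zero]
    exact isHomogeneous_zero _ _ _
  · apply isHomogeneous_monomial
    have hdeg : Finsupp.degree m = n + 1 := by
      have := hf (mem_support_iff.mp hm)
      rwa [Pi.one_def, ← Finsupp.degree_eq_weight_one] at this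
    have hle : Finsupp.single i 1 ≤ m := by
      rw [Finsupp.single_le_iff]
      omega
    have hsplit : (m - Finsupp.single i 1) + Finsupp.single i 1 = m :=
      tsub_add_cancel_of_le hle
    have hadd : Finsupp.degree ((m - Finsupp.single i 1) + Finsupp.single i 1) =
        Finsupp.degree (m - Finsupp.single i 1) + Finsupp.degree (Finsupp.single i 1) := by
      simp only [Finsupp.degree_eq_weight_one]
      exact map_add _ _ _
    rw [hsplit] at hadd
    rw [degree_single_one] at hadd
    omega

lemma X_not_dvd_X {i j : Fin 4} (hij : i ≠ j) : ¬ (X i : R4) ∣ X j := by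
  intro hdvd
  have h1 : zeroAt {i} (X j) = 0 := by
    obtain ⟨w, hw⟩ := hdvd
    have h0 : zeroAt {i} (X i) = 0 := by simp [zeroAt]
    rw [hw, map_mul, h0, zero_mul]
  have h2 : zeroAt {i} (X j) = X j := by simp [zeroAt, hij.symm]
  rw [h1] at h2
  exact X_ne_zero _ h2.symm

lemma koszul {G1 G2 G3 : R4} (h : X 1 * G1 + X 2 * G2 + X 3 * G3 = 0) :
    ∃ V1 V2 V3 : R4, G1 = X 2 * V3 - X 3 * V2 ∧ G2 = X 3 * V1 - X 1 * V3 ∧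
      G3 = X 1 * V2 - X 2 * V1 := by
  -- G1 is in the ideal (X 2, X 3)
  have hmem : G1 ∈ Ideal.span ((fun i => (X i : R4)) '' ↑({2, 3} : Finset (Fin 4))) := by
    rw [← zeroAt_eq_zero_iff]
    have h1 : zeroAt {2, 3} (X 1 * G1 + X 2 * G2 + X 3 * G3) = 0 := by rw [h, map_zero]
    have h2 : zeroAt {2, 3} (X 2) = 0 := by simp [zeroAt]
    have h3 : zeroAt {2, 3} (X 3) = 0 := by simp [zeroAt]
    have h4 : zeroAt {2, 3} (X 1) = X 1 := by
      simp [zeroAt, show (1:Fin 4) ∉ ({2,3}:Finset (Fin 4)) from by decide]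
    simp only [map_add, map_mul, h2, h3, h4, zero_mul, add_zero] at h1
    rcases mul_eq_zero.mp h1 with h' | h'
    · exact absurd h' (X_ne_zero _)
    · exact h'
  have himg : ((fun i => (X i : R4)) '' ↑({2, 3} : Finset (Fin 4))) = {X 2, X 3} := by
    simp [Finset.coe_insert, Set.image_insert_eq]
  rw [himg, Ideal.mem_span_pair] at hmem
  obtain ⟨b, c, hbc⟩ := hmem
  have hsub : X 2 * (X 1 * b + G2) + X 3 * (X 1 * c + G3) = 0 := by
    linear_combination h + X 1 * hbc
  have hdvd3 : (X 3 : R4) ∣ X 1 * b + G2 := by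
    have : (X 3 : R4) ∣ X 2 * (X 1 * b + G2) :=
      ⟨-(X 1 * c + G3), by linear_combination hsub⟩
    rcases (prime_X4 3).dvd_or_dvd this with h' | h'
    · exact absurd h' (X_not_dvd_X (by decide))
    · exact h'
  obtain ⟨V1, hV1⟩ := hdvd3
  refine ⟨V1, -c, b, by linear_combination -hbc, by linear_combination hV1, ?_⟩
  -- from hsub and hV1 : X 3 * (X 2 * V1 + X 1 * c + G3) = 0
  have h0 : X 3 * (X 2 * V1 + X 1 * c + G3) = 0 := by
    linear_combination hsub - X 2 * hV1
  rcases mul_eq_zero.mp h0 with h' | h'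
  · exact absurd h' (X_ne_zero _)
  · linear_combination h'

lemma exists_unit_col (c : Fin 4 → ℂ) (hc : c ≠ 0) :
    ∃ A : Matrix (Fin 4) (Fin 4) ℂ, IsUnit A ∧ ∀ k, A k 0 = c k := by
  obtain ⟨i₀, hi₀⟩ := Function.ne_iff.mp hc
  simp only [Pi.zero_apply] at hi₀
  set π := Equiv.swap (0 : Fin 4) i₀ with hπ
  set Ad : Matrix (Fin 4) (Fin 4) ℂ :=
    Matrix.of (fun k j => if j = i₀ then c k else if k = j then 1 else 0) with hAd
  set B : Matrix (Fin 4) (Fin 4) ℂ :=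
    Matrix.of (fun j l => if l = i₀ then (if j = i₀ then (c i₀)⁻¹ else -(c j * (c i₀)⁻¹))
      else (if j = l then 1 else 0)) with hB
  have hBi₀ : ∀ l, B i₀ l = if l = i₀ then (c i₀)⁻¹ else 0 := by
    intro l
    by_cases hl : l = i₀
    · simp [hB, hl]
    · simp [hB, if_neg hl, if_neg (Ne.symm hl)]
  have hAB : Ad * B = 1 := by
    ext k l
    rw [Matrix.mul_apply]
    have hsplit : ∀ j, Ad k j * B j l =
        (if j = i₀ then c k * B i₀ l else 0) +
        (if j = k then (if k = i₀ then 0 else B k l) else 0) := by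
      intro j
      by_cases hj : j = i₀
      · subst hj
        have h1 : Ad k j = c k := by simp [hAd]
        rw [h1, if_pos rfl]
        by_cases hjk : j = k
        · subst hjk; simp
        · simp [if_neg hjk]
      · have h1 : Ad k j = if k = j then 1 else 0 := by simp [hAd, hj]
        rw [h1, if_neg hj]
        by_cases hkj : k = j
        · subst hkj
          simp [if_neg hj]
        · simp [if_neg hkj, if_neg (Ne.symm hkj)]
    rw [Finset.sum_congr rfl fun j _ => hsplit j, Finset.sum_add_distrib,
      Finset.sum_ite_eq', Finset.sum_ite_eq']
    simp only [Finset.mem_univ, if_true]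
    rw [hBi₀]
    by_cases hk : k = i₀ <;> by_cases hl : l = i₀
    · subst hk; subst hl
      simp [Matrix.one_apply, mul_inv_cancel₀ hi₀]
    · subst hk
      have hkl : k ≠ l := fun h => hl h.symm
      simp [Matrix.one_apply, if_neg hl, if_neg hkl]
    · subst hl
      have hBkl : B k l = -(c k * (c l)⁻¹) := by simp [hB, hk]
      rw [hBkl]
      simp only [Matrix.one_apply, if_neg hk, if_pos rfl, if_true]
      ring
    · have hBkl : B k l = if k = l then 1 else 0 := by simp [hB, hl]
      rw [hBkl]
      simp [Matrix.one_apply, hk, hl]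
  have hBA : B * Ad = 1 := mul_eq_one_comm.mp hAB
  set A' : Matrix (Fin 4) (Fin 4) ℂ := Matrix.of (fun k l => Ad k (π l)) with hA'
  set B' : Matrix (Fin 4) (Fin 4) ℂ := Matrix.of (fun j l => B (π j) l) with hB'
  have h1 : A' * B' = 1 := by
    ext k l
    rw [Matrix.mul_apply]
    calc ∑ j, A' k j * B' j l = ∑ j, Ad k (π j) * B (π j) l := rfl
    _ = ∑ j, Ad k j * B j l := Equiv.sum_comp π (fun j => Ad k j * B j l)
    _ = (Ad * B) k l := (Matrix.mul_apply).symm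
    _ = (1 : Matrix (Fin 4) (Fin 4) ℂ) k l := by rw [hAB]
  have h2 : B' * A' = 1 := by
    ext k l
    rw [Matrix.mul_apply]
    calc ∑ j, B' k j * A' j l = ∑ j, B (π k) j * Ad j (π l) := rfl
    _ = (B * Ad) (π k) (π l) := (Matrix.mul_apply).symm
    _ = (1 : Matrix (Fin 4) (Fin 4) ℂ) (π k) (π l) := by rw [hBA]
    _ = (1 : Matrix (Fin 4) (Fin 4) ℂ) k l := by
        rw [Matrix.one_apply, Matrix.one_apply]
        by_cases h : k = l
        · simp [h]
        · simp [if_neg h, fun hh => h (π.injective hh)]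
  refine ⟨A', ⟨⟨A', B', h1, h2⟩, rfl⟩, fun k => ?_⟩
  show Ad k (π 0) = c k
  rw [hπ]
  simp [Equiv.swap_apply_left, hAd]

def GG (A : Matrix (Fin 4) (Fin 4) ℂ) (F : Fin 4 → R4) : Fin 4 → R4 :=
  fun j => ∑ i, subA A (F i) * C (A i j)

lemma pderiv_GG (A : Matrix (Fin 4) (Fin 4) ℂ) (F : Fin 4 → R4) (b c : Fin 4) :
    pderiv b (GG A F c) = ∑ i, ∑ n, C (A n b) * subA A (pderiv n (F i)) * C (A i c) := by
  unfold GG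
  rw [map_sum]
  refine Finset.sum_congr rfl fun i _ => ?_
  rw [pderiv_mul, pderiv_C, mul_zero, add_zero, pderiv_subA, Finset.sum_mul]

lemma rotGG (A : Matrix (Fin 4) (Fin 4) ℂ) (F : Fin 4 → R4) (b c : Fin 4) :
    pderiv b (GG A F c) - pderiv c (GG A F b) =
      ∑ n, ∑ i, C (A n b) * C (A i c) *
        subA A (pderiv n (F i) - pderiv i (F n)) := by
  rw [pderiv_GG, pderiv_GG]
  rw [Finset.sum_comm (γ := Fin 4)]
  rw [← Finset.sum_sub_distrib]
  refine Finset.sum_congr rfl fun n _ => ?_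
  rw [← Finset.sum_sub_distrib]
  refine Finset.sum_congr rfl fun i _ => ?_
  rw [map_sub]
  ring

lemma triple_prod (x : Fin 4 → R4) (y : Fin 4 → Fin 4 → R4) :
    (∑ k, x k) * (∑ n, ∑ i, y n i) =
      ∑ t : Fin 4 × Fin 4 × Fin 4, x t.1 * y t.2.1 t.2.2 := by
  rw [Fintype.sum_prod_type, Finset.sum_mul]
  refine Finset.sum_congr rfl fun k _ => ?_
  rw [Fintype.sum_prod_type, Finset.mul_sum]
  refine Finset.sum_congr rfl fun n _ => by rw [Finset.mul_sum]

lemma intGG (A : Matrix (Fin 4) (Fin 4) ℂ) (F : Fin 4 → R4) (hInt : IntegrableForm F)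
    (a b c : Fin 4) :
    GG A F a * (pderiv b (GG A F c) - pderiv c (GG A F b)) +
    GG A F b * (pderiv c (GG A F a) - pderiv a (GG A F c)) +
    GG A F c * (pderiv a (GG A F b) - pderiv b (GG A F a)) = 0 := by
  set T : Fin 4 → Fin 4 → Fin 4 → R4 :=
    fun k n i => F k * (pderiv n (F i) - pderiv i (F n)) with hT
  have hN : ∀ a' b' c' : Fin 4,
      GG A F a' * (pderiv b' (GG A F c') - pderiv c' (GG A F b')) =
      ∑ t : Fin 4 × Fin 4 × Fin 4,
        C (A t.1 a') * C (A t.2.1 b') * C (A t.2.2 c') * subA A (T t.1 t.2.1 t.2.2) := by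
    intro a' b' c'
    rw [rotGG]
    show (∑ k, subA A (F k) * C (A k a')) * _ = _
    rw [triple_prod]
    refine Finset.sum_congr rfl fun t _ => ?_
    rw [hT]
    simp only [map_mul]
    ring
  rw [hN a b c, hN b c a, hN c a b]
  have h2 : (∑ t : Fin 4 × Fin 4 × Fin 4,
      C (A t.1 b) * C (A t.2.1 c) * C (A t.2.2 a) * subA A (T t.1 t.2.1 t.2.2)) =
      ∑ t : Fin 4 × Fin 4 × Fin 4,
      C (A t.1 a) * C (A t.2.1 b) * C (A t.2.2 c) * subA A (T t.2.1 t.2.2 t.1) := by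
    refine Fintype.sum_equiv ⟨fun t => (t.2.2, t.1, t.2.1), fun t => (t.2.1, t.2.2, t.1),
      by rintro ⟨i, j, k⟩; rfl, by rintro ⟨i, j, k⟩; rfl⟩ _ _ fun t => ?_
    rcases t with ⟨i, j, k⟩
    show C (A i b) * C (A j c) * C (A k a) * subA A (T i j k) =
      C (A k a) * C (A i b) * C (A j c) * subA A (T i j k)
    ring
  have h3 : (∑ t : Fin 4 × Fin 4 × Fin 4,
      C (A t.1 c) * C (A t.2.1 a) * C (A t.2.2 b) * subA A (T t.1 t.2.1 t.2.2)) =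
      ∑ t : Fin 4 × Fin 4 × Fin 4,
      C (A t.1 a) * C (A t.2.1 b) * C (A t.2.2 c) * subA A (T t.2.2 t.1 t.2.1) := by
    refine Fintype.sum_equiv ⟨fun t => (t.2.1, t.2.2, t.1), fun t => (t.2.2, t.1, t.2.1),
      by rintro ⟨i, j, k⟩; rfl, by rintro ⟨i, j, k⟩; rfl⟩ _ _ fun t => ?_
    rcases t with ⟨i, j, k⟩
    show C (A i c) * C (A j a) * C (A k b) * subA A (T i j k) =
      C (A j a) * C (A k b) * C (A i c) * subA A (T i j k)
    ring
  rw [h2, h3, ← Finset.sum_add_distrib, ← Finset.sum_add_distrib]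
  refine Finset.sum_eq_zero fun t _ => ?_
  rcases t with ⟨i, j, k⟩
  show C (A i a) * C (A j b) * C (A k c) * subA A (T i j k) +
      C (A i a) * C (A j b) * C (A k c) * subA A (T j k i) +
      C (A i a) * C (A j b) * C (A k c) * subA A (T k i j) = 0
  have : T i j k + T j k i + T k i j = 0 := hInt i j k
  calc C (A i a) * C (A j b) * C (A k c) * subA A (T i j k) +
      C (A i a) * C (A j b) * C (A k c) * subA A (T j k i) +
      C (A i a) * C (A j b) * C (A k c) * subA A (T k i j)
      = C (A i a) * C (A j b) * C (A k c) * subA A (T i j k + T j k i + T k i j) := by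
        rw [map_add, map_add]; ring
  _ = 0 := by rw [this, map_zero, mul_zero]


lemma sum_C_one_left (x : Fin 4 → MvPolynomial (Fin 4) ℂ) (i : Fin 4) :
    ∑ k, C ((1 : Matrix (Fin 4) (Fin 4) ℂ) i k) * x k = x i := by
  have : ∀ k, C ((1 : Matrix (Fin 4) (Fin 4) ℂ) i k) * x k =
      if i = k then x k else 0 := by
    intro k
    rw [Matrix.one_apply]
    by_cases h : i = k <;> simp [h]
  simp_rw [this]
  rw [Finset.sum_ite_eq]
  simp

lemma collapseC' (M N : Matrix (Fin 4) (Fin 4) ℂ) (x : Fin 4 → MvPolynomial (Fin 4) ℂ)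
    (i : Fin 4) :
    ∑ j, (∑ k, x k * C (N k j)) * C (M j i) = ∑ k, x k * C ((N * M) k i) := by
  simp only [Matrix.mul_apply, map_sum, Finset.sum_mul, Finset.mul_sum]
  rw [Finset.sum_comm]
  refine Finset.sum_congr rfl fun k _ => Finset.sum_congr rfl fun j _ => ?_
  rw [map_mul]; ring

lemma GG_isHomogeneous {A : Matrix (Fin 4) (Fin 4) ℂ} {F : Fin 4 → MvPolynomial (Fin 4) ℂ}
    {d : ℕ} (hhom : ∀ i, (F i).IsHomogeneous (d + 1)) (j : Fin 4) :
    (GG A F j).IsHomogeneous (d + 1) := by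
  refine IsHomogeneous.sum _ _ _ fun i _ => ?_
  have := (subA_isHomogeneous A (hhom i)).mul (isHomogeneous_C (Fin 4) (A i j))
  simpa using this

lemma subA_recover {A : Matrix (Fin 4) (Fin 4) ℂ} (hAB : A * A⁻¹ = 1)
    (F : Fin 4 → MvPolynomial (Fin 4) ℂ) (i : Fin 4) :
    subA A (F i) = ∑ j, GG A F j * C (A⁻¹ j i) := by
  have : ∀ j, GG A F j = ∑ k, subA A (F k) * C (A k j) := fun j => rfl
  simp_rw [this]
  rw [collapseC' A⁻¹ A _ i, hAB]
  have : ∀ k, subA A (F k) * C ((1 : Matrix (Fin 4) (Fin 4) ℂ) k i) =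
      C ((1 : Matrix (Fin 4) (Fin 4) ℂ) k i) * subA A (F k) := fun k => mul_comm _ _
  simp_rw [this]
  have h2 : ∀ k, ((1 : Matrix (Fin 4) (Fin 4) ℂ) k i) = ((1 : Matrix (Fin 4) (Fin 4) ℂ) i k) := by
    intro k
    rw [Matrix.one_apply, Matrix.one_apply]
    by_cases h : k = i
    · simp [h]
    · simp [if_neg h, if_neg (Ne.symm h)]
  simp_rw [h2]
  exact (sum_C_one_left (fun k => subA A (F k)) i).symm

lemma subA_equiv_prime {A : Matrix (Fin 4) (Fin 4) ℂ} (hAB : A * A⁻¹ = 1)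
    (hBA : A⁻¹ * A = 1) {p : MvPolynomial (Fin 4) ℂ} (hp : Prime p) :
    Prime (subA A⁻¹ p) := by
  have h1 : ∀ f, subA A (subA A⁻¹ f) = f := by
    intro f; rw [subA_subA, hBA, subA_one]
  have h2 : ∀ f, subA A⁻¹ (subA A f) = f := by
    intro f; rw [subA_subA, hAB, subA_one]
  let e : MvPolynomial (Fin 4) ℂ ≃* MvPolynomial (Fin 4) ℂ :=
    { toFun := subA A⁻¹, invFun := subA A, left_inv := h1, right_inv := h2,
      map_mul' := fun a b => map_mul _ a b }
  exact (MulEquiv.prime_iff e).mpr hp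

lemma codim_transport {A : Matrix (Fin 4) (Fin 4) ℂ} (hA : IsUnit A)
    {F : Fin 4 → MvPolynomial (Fin 4) ℂ} (hcd : CodimGE2 F) :
    ¬ ∃ p : MvPolynomial (Fin 4) ℂ, Prime p ∧ ∀ j, p ∣ GG A F j := by
  have hAB : A * A⁻¹ = 1 := Matrix.mul_nonsing_inv A ((Matrix.isUnit_iff_isUnit_det A).mp hA)
  have hBA : A⁻¹ * A = 1 := Matrix.nonsing_inv_mul A ((Matrix.isUnit_iff_isUnit_det A).mp hA)
  have h2 : ∀ f, subA A⁻¹ (subA A f) = f := by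
    intro f; rw [subA_subA, hAB, subA_one]
  rintro ⟨p, hp, hdvd⟩
  refine hcd ⟨subA A⁻¹ p, subA_equiv_prime hAB hBA hp, fun i => ?_⟩
  have hσ : p ∣ subA A (F i) := by
    rw [subA_recover hAB F i]
    exact Finset.dvd_sum fun j _ => Dvd.dvd.mul_right (hdvd j) _
  obtain ⟨w, hw⟩ := hσ
  refine ⟨subA A⁻¹ w, ?_⟩
  rw [← h2 (F i), hw, map_mul]

lemma GG_ne_zero {A : Matrix (Fin 4) (Fin 4) ℂ} (hA : IsUnit A)
    {F : Fin 4 → MvPolynomial (Fin 4) ℂ} (hcd : CodimGE2 F) :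
    ∃ j, GG A F j ≠ 0 := by
  have hAB : A * A⁻¹ = 1 := Matrix.mul_nonsing_inv A ((Matrix.isUnit_iff_isUnit_det A).mp hA)
  have h2 : ∀ f, subA A⁻¹ (subA A f) = f := by
    intro f; rw [subA_subA, hAB, subA_one]
  by_contra hall
  push_neg at hall
  refine hcd ⟨X 0, prime_X4 0, fun i => ?_⟩
  have : subA A (F i) = 0 := by
    rw [subA_recover hAB F i]
    simp [hall]
  have : F i = 0 := by
    rw [← h2 (F i), this, map_zero]
  rw [this]
  exact dvd_zero _

lemma mp_dir {d : ℕ} {F : Fin 4 → MvPolynomial (Fin 4) ℂ} (hfol : IsFoliation d F)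
    (h : SplitsAsO1OplusO1subD d F) : IsLinearPullback F := by
  obtain ⟨hhom, heuler, hint, hcd⟩ := hfol
  obtain ⟨c, v, hvhom, hiff, hind⟩ := h
  have hc0 : ∑ i, C (c i) * F i = 0 := by
    have := (hiff (fun i => (1 : MvPolynomial (Fin 4) ℂ) * C (c i) + 0 * v i + 0 * X i)).mpr
      ⟨1, 0, 0, rfl⟩
    simpa using this
  have hcne : c ≠ 0 := by
    intro hc
    refine one_ne_zero ((hind 1 0 0 ?_).1)
    funext i
    simp [hc]
  obtain ⟨A, hA, hAcol⟩ := exists_unit_col c hcne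
  have hG0 : GG A F 0 = 0 := by
    show ∑ i, subA A (F i) * C (A i 0) = 0
    calc ∑ i, subA A (F i) * C (A i 0) = ∑ i, subA A (C (c i) * F i) := by
          refine Finset.sum_congr rfl fun i _ => ?_
          rw [map_mul, subA_C, hAcol]; ring
    _ = subA A (∑ i, C (c i) * F i) := (map_sum _ _ _).symm
    _ = 0 := by rw [hc0, map_zero]
  refine ⟨A, hA, hG0, fun j => ?_⟩
  show pderiv 0 (GG A F j) = 0
  have hprop : ∀ j k, pderiv (0 : Fin 4) (GG A F j) * GG A F k =
      pderiv (0 : Fin 4) (GG A F k) * GG A F j := by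
    intro j k
    have hI := intGG A F hint j 0 k
    rw [hG0] at hI
    simp only [map_zero, zero_mul, mul_zero, add_zero, zero_add, sub_zero, zero_sub] at hI
    linear_combination -hI
  obtain ⟨hh, hη⟩ := proportional (codim_transport hA hcd) hprop
  obtain ⟨j₀, hj₀⟩ := GG_ne_zero hA hcd
  have hh0 : hh = 0 := by
    refine eq_zero_of_mul_isHomogeneous_lt (GG_isHomogeneous hhom j₀) hj₀ ?_ (lt_add_one d)
    rw [← hη j₀]
    exact pderiv_isHomogeneous (GG_isHomogeneous hhom j₀) 0
  rw [hη j, hh0, zero_mul]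

set_option maxHeartbeats 2000000 in
lemma mpr_dir {d : ℕ} {F : Fin 4 → MvPolynomial (Fin 4) ℂ} (hfol : IsFoliation d F)
    (h : IsLinearPullback F) : SplitsAsO1OplusO1subD d F := by
  obtain ⟨hhom, heuler, hint, hcd⟩ := hfol
  obtain ⟨A, hA, h1, _h2⟩ := h
  have hdet := (Matrix.isUnit_iff_isUnit_det A).mp hA
  have hAB : A * A⁻¹ = 1 := Matrix.mul_nonsing_inv A hdet
  have hBA : A⁻¹ * A = 1 := Matrix.nonsing_inv_mul A hdet
  have hστ : ∀ f : MvPolynomial (Fin 4) ℂ, subA A⁻¹ (subA A f) = f := fun f => by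
    rw [subA_subA, hAB, subA_one]
  have hτσ : ∀ f : MvPolynomial (Fin 4) ℂ, subA A (subA A⁻¹ f) = f := fun f => by
    rw [subA_subA, hBA, subA_one]
  have hG0 : GG A F 0 = 0 := h1
  have heuler' : ∑ i, X i * F i = 0 := heuler
  have hGEuler : ∑ j, X j * GG A F j = 0 := by
    calc ∑ j, X j * GG A F j = ∑ j, ∑ i, subA A (F i) * C (A i j) * X j := by
          refine Finset.sum_congr rfl fun j _ => ?_
          show X j * ∑ i, subA A (F i) * C (A i j) = _
          rw [Finset.mul_sum]
          exact Finset.sum_congr rfl fun i _ => by ring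
    _ = ∑ i, subA A (F i) * subA A (X i) := by
          rw [Finset.sum_comm]
          refine Finset.sum_congr rfl fun i _ => ?_
          rw [subA_X, Finset.mul_sum]
          exact Finset.sum_congr rfl fun j _ => by ring
    _ = subA A (∑ i, X i * F i) := by
          rw [map_sum]
          exact Finset.sum_congr rfl fun i _ => by rw [map_mul]; ring
    _ = 0 := by rw [heuler', map_zero]
  have h123 : X 1 * GG A F 1 + X 2 * GG A F 2 + X 3 * GG A F 3 = 0 := by
    rw [Fin.sum_univ_four, hG0, mul_zero, zero_add] at hGEuler
    exact hGEuler
  obtain ⟨V1, V2, V3, hk1, hk2, hk3⟩ := koszul h123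
  have hGhom : ∀ j, (GG A F j).IsHomogeneous (d + 1) := GG_isHomogeneous hhom
  have hcompX : ∀ (i : Fin 4) (f : MvPolynomial (Fin 4) ℂ),
      homogeneousComponent (d + 1) (X i * f) = X i * homogeneousComponent d f := by
    intro i f
    rw [mul_comm, homogComp_mul_right (isHomogeneous_X ℂ i) f d, mul_comm]
  set W1 := homogeneousComponent d V1 with hW1def
  set W2 := homogeneousComponent d V2 with hW2def
  set W3 := homogeneousComponent d V3 with hW3def
  have hG1 : GG A F 1 = X 2 * W3 - X 3 * W2 := by
    conv_lhs => rw [← homogComp_self (hGhom 1), hk1]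
    rw [map_sub, hcompX, hcompX]
  have hG2 : GG A F 2 = X 3 * W1 - X 1 * W3 := by
    conv_lhs => rw [← homogComp_self (hGhom 2), hk2]
    rw [map_sub, hcompX, hcompX]
  have hG3 : GG A F 3 = X 1 * W2 - X 2 * W1 := by
    conv_lhs => rw [← homogComp_self (hGhom 3), hk3]
    rw [map_sub, hcompX, hcompX]
  clear hk1 hk2 hk3
  set Vt : Fin 4 → MvPolynomial (Fin 4) ℂ :=
    fun j => if j = 1 then W1 else if j = 2 then W2 else if j = 3 then W3 else 0 with hVt
  have hVt0 : Vt 0 = 0 := by simp [hVt]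
  have hVt1 : Vt 1 = W1 := by simp [hVt]
  have hVt2 : Vt 2 = W2 := by simp [hVt]
  have hVt3 : Vt 3 = W3 := by simp [hVt]
  set v : Fin 4 → MvPolynomial (Fin 4) ℂ :=
    fun i => subA A⁻¹ (∑ j, C (A i j) * Vt j) with hv
  have hvdef : ∀ i, v i = subA A⁻¹ (∑ j, C (A i j) * Vt j) := fun i => by rw [hv]
  have hσv : ∀ i, subA A (v i) = ∑ j, C (A i j) * Vt j := by
    intro i
    rw [hvdef i, hτσ]
  have hsum : ∀ t : Fin 4 → MvPolynomial (Fin 4) ℂ,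
      ∑ j, t j * GG A F j = ∑ i, (∑ j, C (A i j) * t j) * subA A (F i) := by
    intro t
    calc ∑ j, t j * GG A F j = ∑ j, ∑ i, C (A i j) * t j * subA A (F i) := by
          refine Finset.sum_congr rfl fun j _ => ?_
          show t j * ∑ i, subA A (F i) * C (A i j) = _
          rw [Finset.mul_sum]
          exact Finset.sum_congr rfl fun i _ => by ring
    _ = ∑ i, (∑ j, C (A i j) * t j) * subA A (F i) := by
          rw [Finset.sum_comm]
          exact Finset.sum_congr rfl fun i _ => by rw [Finset.sum_mul]
  refine ⟨fun i => A i 0, v, ?_, ?_, ?_⟩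
  · -- homogeneity of v
    intro i
    have hin : (∑ j, C (A i j) * Vt j).IsHomogeneous d := by
      refine IsHomogeneous.sum _ _ _ fun j _ => ?_
      have hVtj : (Vt j).IsHomogeneous d := by
        have hVtexp : Vt j = if j = 1 then W1 else if j = 2 then W2
            else if j = 3 then W3 else 0 := by rw [hVt]
        rw [hVtexp]
        split_ifs
        · exact homogeneousComponent_isHomogeneous d V1
        · exact homogeneousComponent_isHomogeneous d V2
        · exact homogeneousComponent_isHomogeneous d V3
        · exact isHomogeneous_zero _ _ _
      exact hVtj.C_mul _
    rw [hvdef i]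
    exact subA_isHomogeneous A⁻¹ hin
  · -- characterization of syzygies
    intro s
    constructor
    · intro hs
      set t : Fin 4 → MvPolynomial (Fin 4) ℂ :=
        fun j => ∑ k, C (A⁻¹ j k) * subA A (s k) with ht
      have hst : ∀ i, ∑ j, C (A i j) * t j = subA A (s i) := by
        intro i
        calc ∑ j, C (A i j) * t j
            = ∑ j, C (A i j) * ∑ k, C (A⁻¹ j k) * subA A (s k) := by
              refine Finset.sum_congr rfl fun j _ => ?_
              rw [ht]
        _ = ∑ k, C ((A * A⁻¹) i k) * subA A (s k) :=
              collapseC A A⁻¹ (fun k => subA A (s k)) i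
        _ = subA A (s i) := by rw [hAB]; exact sum_C_one_left (fun k => subA A (s k)) i
      have htG : ∑ j, t j * GG A F j = 0 := by
        rw [hsum t]
        calc ∑ i, (∑ j, C (A i j) * t j) * subA A (F i)
            = ∑ i, subA A (s i * F i) := by
              refine Finset.sum_congr rfl fun i _ => ?_
              rw [hst i, map_mul]
        _ = subA A (∑ i, s i * F i) := (map_sum _ _ _).symm
        _ = 0 := by rw [hs, map_zero]
      have ht123 : t 1 * GG A F 1 + t 2 * GG A F 2 + t 3 * GG A F 3 = 0 := by
        rw [Fin.sum_univ_four, hG0, mul_zero, zero_add] at htG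
        exact htG
      set u : Fin 4 → MvPolynomial (Fin 4) ℂ :=
        fun j => if j = 1 then t 2 * X 3 - t 3 * X 2
          else if j = 2 then t 3 * X 1 - t 1 * X 3
          else if j = 3 then t 1 * X 2 - t 2 * X 1 else 0 with hu
      have hu0 : u 0 = 0 := by simp [hu]
      have hu1 : u 1 = t 2 * X 3 - t 3 * X 2 := by simp [hu]
      have hu2 : u 2 = t 3 * X 1 - t 1 * X 3 := by simp [hu]
      have hu3 : u 3 = t 1 * X 2 - t 2 * X 1 := by simp [hu]
      have key12 : u 1 * GG A F 2 = u 2 * GG A F 1 := by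
        rw [hu1, hu2]
        linear_combination X 3 * ht123 - t 3 * h123
      have key13 : u 1 * GG A F 3 = u 3 * GG A F 1 := by
        rw [hu1, hu3]
        linear_combination -(X 2 * ht123) + t 2 * h123
      have key23 : u 2 * GG A F 3 = u 3 * GG A F 2 := by
        rw [hu2, hu3]
        linear_combination X 1 * ht123 - t 1 * h123
      have hzero : ∀ j, u 0 * GG A F j = u j * GG A F 0 := by
        intro j
        rw [hu0, hG0]; ring
      have hucross : ∀ i j, u i * GG A F j = u j * GG A F i := by
        intro i j
        fin_cases i <;> fin_cases j
        · rfl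
        · exact hzero _
        · exact hzero _
        · exact hzero _
        · exact (hzero _).symm
        · rfl
        · exact key12
        · exact key13
        · exact (hzero _).symm
        · exact key12.symm
        · rfl
        · exact key23
        · exact (hzero _).symm
        · exact key13.symm
        · exact key23.symm
        · rfl
      obtain ⟨α, hα⟩ := proportional (codim_transport hA hcd) hucross
      have hα1 : t 2 * X 3 - t 3 * X 2 = α * GG A F 1 := by rw [← hu1]; exact hα 1
      have hα2 : t 3 * X 1 - t 1 * X 3 = α * GG A F 2 := by rw [← hu2]; exact hα 2
      have hα3 : t 1 * X 2 - t 2 * X 1 = α * GG A F 3 := by rw [← hu3]; exact hα 3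
      set u' : Fin 4 → MvPolynomial (Fin 4) ℂ :=
        fun j => if j = 0 then 0 else t j + α * Vt j with hu'
      set g' : Fin 4 → MvPolynomial (Fin 4) ℂ :=
        fun j => if j = 0 then 0 else X j with hg'
      have hu'0 : u' 0 = 0 := by simp [hu']
      have hu'1 : u' 1 = t 1 + α * W1 := by simp [hu', hVt1]
      have hu'2 : u' 2 = t 2 + α * W2 := by simp [hu', hVt2]
      have hu'3 : u' 3 = t 3 + α * W3 := by simp [hu', hVt3]
      have hg'0 : g' 0 = 0 := by simp [hg']
      have hg'1 : g' 1 = X 1 := by simp [hg']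
      have hg'2 : g' 2 = X 2 := by simp [hg']
      have hg'3 : g' 3 = X 3 := by simp [hg']
      have hcdg' : ¬ ∃ p : MvPolynomial (Fin 4) ℂ, Prime p ∧ ∀ j, p ∣ g' j := by
        rintro ⟨p, hp, hdvd⟩
        have hp1 : p ∣ X 1 := by rw [← hg'1]; exact hdvd 1
        have hp2 : p ∣ X 2 := by rw [← hg'2]; exact hdvd 2
        obtain ⟨w, hw⟩ := hp1
        rcases (prime_X4 1).irreducible.isUnit_or_isUnit hw with hun | hun
        · exact hp.not_unit hun
        · refine X_not_dvd_X (show (1 : Fin 4) ≠ 2 by decide) ?_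
          obtain ⟨w', hw'⟩ := hun.exists_right_inv
          refine dvd_trans ⟨w', ?_⟩ hp2
          rw [hw, mul_assoc, hw', mul_one]
      have key'12 : u' 1 * g' 2 = u' 2 * g' 1 := by
        rw [hu'1, hu'2, hg'1, hg'2]
        linear_combination hα3 + α * hG3
      have key'13 : u' 1 * g' 3 = u' 3 * g' 1 := by
        rw [hu'1, hu'3, hg'1, hg'3]
        linear_combination -hα2 - α * hG2
      have key'23 : u' 2 * g' 3 = u' 3 * g' 2 := by
        rw [hu'2, hu'3, hg'2, hg'3]
        linear_combination hα1 + α * hG1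
      have hzero2 : ∀ j, u' 0 * g' j = u' j * g' 0 := by
        intro j
        rw [hu'0, hg'0]; ring
      have hcross' : ∀ i j, u' i * g' j = u' j * g' i := by
        intro i j
        fin_cases i <;> fin_cases j
        · rfl
        · exact hzero2 _
        · exact hzero2 _
        · exact hzero2 _
        · exact (hzero2 _).symm
        · rfl
        · exact key'12
        · exact key'13
        · exact (hzero2 _).symm
        · exact key'12.symm
        · rfl
        · exact key'23
        · exact (hzero2 _).symm
        · exact key'13.symm
        · exact key'23.symm
        · rfl
      obtain ⟨β, hβ⟩ := proportional hcdg' hcross'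
      have hβ1 : t 1 + α * W1 = β * X 1 := by rw [← hu'1, ← hg'1]; exact hβ 1
      have hβ2 : t 2 + α * W2 = β * X 2 := by rw [← hu'2, ← hg'2]; exact hβ 2
      have hβ3 : t 3 + α * W3 = β * X 3 := by rw [← hu'3, ← hg'3]; exact hβ 3
      refine ⟨subA A⁻¹ (t 0 - β * X 0), subA A⁻¹ (-α), subA A⁻¹ β, ?_⟩
      funext i
      have hsi : s i = subA A⁻¹ (∑ j, C (A i j) * t j) := by
        rw [hst i, hστ]
      have hexp : ∑ j, C (A i j) * t j =
          (t 0 - β * X 0) * C (A i 0) + (-α) * (∑ j, C (A i j) * Vt j) +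
            β * subA A (X i) := by
        rw [subA_X, Fin.sum_univ_four, Fin.sum_univ_four, Fin.sum_univ_four]
        rw [hVt0, hVt1, hVt2, hVt3]
        linear_combination (C (A i 1)) * hβ1 + (C (A i 2)) * hβ2 + (C (A i 3)) * hβ3
      rw [hsi, hexp]
      rw [map_add, map_add, map_mul, map_mul, map_mul, subA_C, hστ]
    · rintro ⟨p, q, r, rfl⟩
      have hcF : ∑ i, C (A i 0) * F i = 0 := by
        have h0 : subA A⁻¹ (∑ i, subA A (F i) * C (A i 0)) = 0 := by
          rw [show (∑ i, subA A (F i) * C (A i 0)) = GG A F 0 from rfl, hG0, map_zero]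
        rw [map_sum] at h0
        calc ∑ i, C (A i 0) * F i
            = ∑ i, subA A⁻¹ (subA A (F i) * C (A i 0)) := by
              refine Finset.sum_congr rfl fun i _ => ?_
              rw [map_mul, subA_C, hστ]; ring
        _ = 0 := h0
      have hvF : ∑ i, v i * F i = 0 := by
        have hVG : ∑ j, Vt j * GG A F j = 0 := by
          rw [Fin.sum_univ_four, hVt0, hVt1, hVt2, hVt3, hG0, hG1, hG2, hG3]
          ring
        rw [hsum Vt] at hVG
        calc ∑ i, v i * F i
            = subA A⁻¹ (∑ i, (∑ j, C (A i j) * Vt j) * subA A (F i)) := by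
              rw [map_sum]
              refine Finset.sum_congr rfl fun i _ => ?_
              rw [map_mul, hστ, ← hvdef i]
        _ = 0 := by rw [hVG, map_zero]
      calc ∑ i, (p * C (A i 0) + q * v i + r * X i) * F i
          = p * (∑ i, C (A i 0) * F i) + q * (∑ i, v i * F i) +
            r * (∑ i, X i * F i) := by
            rw [Finset.mul_sum, Finset.mul_sum, Finset.mul_sum, ← Finset.sum_add_distrib,
              ← Finset.sum_add_distrib]
            exact Finset.sum_congr rfl fun i _ => by ring
      _ = 0 := by rw [hcF, hvF, heuler']; ring
  · -- independence
    intro p q r h0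
    set t : Fin 4 → MvPolynomial (Fin 4) ℂ :=
      fun j => subA A p * (if j = 0 then 1 else 0) + subA A q * Vt j +
        subA A r * X j with ht
    have hT0 : t 0 = subA A p + subA A r * X 0 := by simp [ht, hVt0]
    have hT1 : t 1 = subA A q * W1 + subA A r * X 1 := by simp [ht, hVt1]
    have hT2 : t 2 = subA A q * W2 + subA A r * X 2 := by simp [ht, hVt2]
    have hT3 : t 3 = subA A q * W3 + subA A r * X 3 := by simp [ht, hVt3]
    have hTi : ∀ i, ∑ j, C (A i j) * t j = 0 := by
      intro i
      have hcomb : p * C (A i 0) + q * v i + r * X i = 0 := congrFun h0 i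
      have hstep : ∑ j, C (A i j) * t j =
          subA A (p * C (A i 0) + q * v i + r * X i) := by
        rw [map_add, map_add, map_mul, map_mul, map_mul, subA_C, hσv i, subA_X]
        rw [Fin.sum_univ_four, Fin.sum_univ_four, Fin.sum_univ_four]
        rw [hVt0, hVt1, hVt2, hVt3, hT0, hT1, hT2, hT3]
        ring
      rw [hstep, hcomb, map_zero]
    have htzero : ∀ j, t j = 0 := by
      intro j
      have hcoll := collapseC A⁻¹ A t j
      rw [hBA, sum_C_one_left t j] at hcoll
      rw [← hcoll]
      refine Finset.sum_eq_zero fun i' _ => ?_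
      rw [hTi i', mul_zero]
    have ht0 : subA A p + subA A r * X 0 = 0 := by rw [← hT0]; exact htzero 0
    have ht1 : subA A q * W1 + subA A r * X 1 = 0 := by rw [← hT1]; exact htzero 1
    have ht2 : subA A q * W2 + subA A r * X 2 = 0 := by rw [← hT2]; exact htzero 2
    have ht3 : subA A q * W3 + subA A r * X 3 = 0 := by rw [← hT3]; exact htzero 3
    have hq'0 : subA A q = 0 := by
      by_contra hq'ne
      have hrG1 : subA A q * (subA A r * GG A F 1) = 0 := by
        linear_combination subA A q * subA A r * hG1 + subA A r * X 2 * ht3 -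
          subA A r * X 3 * ht2
      have hrG2 : subA A q * (subA A r * GG A F 2) = 0 := by
        linear_combination subA A q * subA A r * hG2 + subA A r * X 3 * ht1 -
          subA A r * X 1 * ht3
      have hrG3 : subA A q * (subA A r * GG A F 3) = 0 := by
        linear_combination subA A q * subA A r * hG3 + subA A r * X 1 * ht2 -
          subA A r * X 2 * ht1
      obtain ⟨j₀, hj₀⟩ := GG_ne_zero hA hcd
      have hB1 : subA A r * GG A F 1 = 0 := (mul_eq_zero.mp hrG1).resolve_left hq'ne
      have hB2 : subA A r * GG A F 2 = 0 := (mul_eq_zero.mp hrG2).resolve_left hq'ne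
      have hB3 : subA A r * GG A F 3 = 0 := (mul_eq_zero.mp hrG3).resolve_left hq'ne
      have hr'0 : subA A r = 0 := by
        have hrG : subA A r * GG A F j₀ = 0 := by
          fin_cases j₀
          · exact absurd hG0 hj₀
          · exact hB1
          · exact hB2
          · exact hB3
        exact (mul_eq_zero.mp hrG).resolve_right hj₀
      rw [hr'0, zero_mul, add_zero] at ht1 ht2 ht3
      have hW1z : W1 = 0 := (mul_eq_zero.mp ht1).resolve_left hq'ne
      have hW2z : W2 = 0 := (mul_eq_zero.mp ht2).resolve_left hq'ne
      have hW3z : W3 = 0 := (mul_eq_zero.mp ht3).resolve_left hq'ne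
      have hGz1 : GG A F 1 = 0 := by rw [hG1, hW2z, hW3z]; ring
      have hGz2 : GG A F 2 = 0 := by rw [hG2, hW1z, hW3z]; ring
      have hGz3 : GG A F 3 = 0 := by rw [hG3, hW1z, hW2z]; ring
      refine hj₀ ?_
      fin_cases j₀
      · exact hG0
      · exact hGz1
      · exact hGz2
      · exact hGz3
    have hr'0 : subA A r = 0 := by
      rw [hq'0, zero_mul, zero_add] at ht1
      rcases mul_eq_zero.mp ht1 with h' | h'
      · exact h'
      · exact absurd h' (X_ne_zero _)
    have hp'0 : subA A p = 0 := by
      rw [hr'0, zero_mul, add_zero] at ht0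
      exact ht0
    refine ⟨?_, ?_, ?_⟩
    · have := congrArg (subA A⁻¹) hp'0
      rwa [hστ, map_zero] at this
    · have := congrArg (subA A⁻¹) hq'0
      rwa [hστ, map_zero] at this
    · have := congrArg (subA A⁻¹) hr'0
      rwa [hστ, map_zero] at this

end AuxLemmas

/-- A degree `d` reduced codimension one foliation on `ℙ³`
has tangent sheaf isomorphic to `𝓞(1) ⊕ 𝓞(1-d)` if and only if it is the
linear pull-back of a degree `d` reduced foliation on `ℙ²`. -/
theorem split_O1_iff_linear_pullback (d : ℕ) (F : Fin 4 → R4)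
    (hfol : IsFoliation d F) :
    SplitsAsO1OplusO1subD d F ↔ IsLinearPullback F :=
  ⟨mp_dir hfol, mpr_dir hfol⟩

end
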